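/- Let 𝔤 be a non-model complex filiform Lie algebra of dimension n with invariant z2 and write z2* = n+1−z2. Then [C^{z2*}𝔤, C^{z2*}𝔤] = 0 and [C^{z2*−1}𝔤, C^{z2*}𝔤] ≠ 0; that is, θ_{z2*}(𝔤) = z2*. -/

import Mathlib

open Module

variable (L : Type) [LieRing L] [LieAlgebra ℂ L]

/-- `C L k` is the `k`-th term of the lower central series of `L`,
with the convention `C L 1 = L`. -/
def C (k : ℕ) : LieIdeal ℂ L := LieModule.lowerCentralSeries ℂ L L (k - 1)

/-- `L` is a filiform Lie algebra of dimension `n`. -/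
def IsFiliform (n : ℕ) : Prop :=
  2 ≤ n ∧ FiniteDimensional ℂ L ∧ finrank ℂ L = n ∧
    ∀ k, 2 ≤ k → k ≤ n → finrank ℂ (C L k) = n - k

/-- `e 1, …, e n` is an adapted basis of `L`. -/
def IsAdaptedBasis (n : ℕ) (e : ℕ → L) : Prop :=
  (∃ b : Basis (Fin n) ℂ L, ∀ i : Fin n, b i = e (i.1 + 1)) ∧
  (∀ h, 3 ≤ h → h ≤ n → ⁅e 1, e h⁆ = e (h - 1)) ∧
  (∀ h, 1 ≤ h → h ≤ n → ⁅e 2, e h⁆ = 0) ∧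
  (∀ h, 2 ≤ h → h ≤ n → ⁅e 3, e h⁆ = 0)
section Prelim

variable {L : Type} [LieRing L] [LieAlgebra ℂ L]

local notation "D" => LieModule.lowerCentralSeries ℂ L L

lemma my_lie_lie_le (I J K : LieIdeal ℂ L) :
    ⁅(⁅I, J⁆ : LieIdeal ℂ L), K⁆ ≤ ⁅I, ⁅J, K⁆⁆ ⊔ ⁅J, ⁅I, K⁆⁆ := by
  rw [LieSubmodule.lie_le_iff]
  intro x hx m hm
  have hx' : x ∈ LieSubmodule.toSubmodule (⁅I, J⁆ : LieIdeal ℂ L) := hx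
  rw [LieSubmodule.lieIdeal_oper_eq_linear_span'] at hx'
  clear hx
  induction hx' using Submodule.span_induction with
  | mem z hz =>
    obtain ⟨a, ha, b, hb, rfl⟩ := hz
    rw [lie_lie]
    refine sub_mem ?_ ?_
    · exact (le_sup_left : ⁅I, ⁅J, K⁆⁆ ≤ _)
        (LieSubmodule.lie_mem_lie ha (LieSubmodule.lie_mem_lie hb hm))
    · exact (le_sup_right : ⁅J, ⁅I, K⁆⁆ ≤ _)
        (LieSubmodule.lie_mem_lie hb (LieSubmodule.lie_mem_lie ha hm))
  | zero => simp
  | add y z _ _ hy hz => rw [add_lie]; exact add_mem hy hz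
  | smul c y _ hy => rw [smul_lie]; exact Submodule.smul_mem _ c hy

lemma lie_D_le (a b : ℕ) : ⁅(D a : LieIdeal ℂ L), D b⁆ ≤ D (a + b + 1) := by
  induction b generalizing a with
  | zero =>
    rw [LieSubmodule.lie_comm]
    simpa using le_refl (D (a + 1))
  | succ b ih =>
    rw [show D (b+1) = ⁅(⊤ : LieIdeal ℂ L), D b⁆ from LieModule.lowerCentralSeries_succ ..,
      LieSubmodule.lie_comm]
    refine le_trans (my_lie_lie_le _ _ _) (sup_le ?_ ?_)
    · calc ⁅(⊤ : LieIdeal ℂ L), ⁅D b, D a⁆⁆ ≤ ⁅(⊤ : LieIdeal ℂ L), D (b + a + 1)⁆ :=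
            LieSubmodule.mono_lie_right _ (by rw [LieSubmodule.lie_comm]; exact (by omega : b + a + 1 = a + b + 1) ▸ ih a)
      _ = D (b + a + 2) := by
            have := (LieModule.lowerCentralSeries_succ ℂ L L (b + a + 1)).symm
            simpa using this
      _ ≤ D (a + (b+1) + 1) := le_of_eq (by ring_nf)
    · calc ⁅(D b : LieIdeal ℂ L), ⁅⊤, D a⁆⁆ = ⁅(D b : LieIdeal ℂ L), D (a+1)⁆ := by
            rw [← LieModule.lowerCentralSeries_succ]
      _ ≤ D (b + (a+1) + 1) := by
            rw [LieSubmodule.lie_comm]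
            exact le_trans (ih (a+1)) (le_of_eq (by ring_nf))
      _ ≤ D (a + (b+1) + 1) := le_of_eq (by ring_nf)

end Prelim

lemma avoid_finitely_many {V : Type} [AddCommGroup V] [Module ℂ V]
    (s : Finset ℕ) (p : ℕ → Submodule ℂ V) (hp : ∀ i ∈ s, p i ≠ ⊤) :
    ∃ x : V, ∀ i ∈ s, x ∉ p i := by
  classical
  induction s using Finset.induction_on with
  | empty => exact ⟨0, fun i hi => absurd hi (by simp)⟩
  | @insert j s hj ih =>
    obtain ⟨x, hx⟩ := ih fun i hi => hp i (Finset.mem_insert_of_mem hi)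
    by_cases hxj : x ∉ p j
    · refine ⟨x, fun i hi => ?_⟩
      rcases Finset.mem_insert.1 hi with rfl | hi
      exacts [hxj, hx i hi]
    push_neg at hxj
    have hyj : ∃ y, y ∉ p j := by
      by_contra hcon
      push_neg at hcon
      exact hp j (Finset.mem_insert_self j s) (Submodule.eq_top_iff'.2 hcon)
    obtain ⟨y, hy⟩ := hyj
    have hbad : ∀ i ∈ s, {t : ℂ | x + t • y ∈ p i}.Subsingleton := by
      intro i hi t₁ h₁ t₂ h₂
      by_contra hne
      have hsub : (t₁ - t₂) • y ∈ p i := by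
        have : x + t₁ • y - (x + t₂ • y) ∈ p i := (p i).sub_mem h₁ h₂
        rw [show x + t₁ • y - (x + t₂ • y) = (t₁ - t₂) • y by rw [sub_smul]; abel] at this
        exact this
      have hyi : y ∈ p i := by
        have := Submodule.smul_mem (p i) (t₁ - t₂)⁻¹ hsub
        rwa [smul_smul, inv_mul_cancel₀ (sub_ne_zero.2 hne), one_smul] at this
      refine hx i hi ?_
      have := (p i).sub_mem h₁ (Submodule.smul_mem _ t₁ hyi)
      rwa [add_sub_cancel_right] at this
    have hfin : ({(0:ℂ)} ∪ ⋃ i ∈ s, {t : ℂ | x + t • y ∈ p i}).Finite :=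
      (Set.finite_singleton 0).union
        (Set.Finite.biUnion s.finite_toSet fun i hi => (hbad i hi).finite)
    obtain ⟨t, ht⟩ := hfin.infinite_compl.nonempty
    simp only [Set.mem_compl_iff, Set.mem_union, Set.mem_singleton_iff, Set.mem_iUnion,
      Set.mem_setOf_eq, not_or, not_exists] at ht
    obtain ⟨ht0, hts⟩ := ht
    refine ⟨x + t • y, fun i hi => ?_⟩
    rcases Finset.mem_insert.1 hi with rfl | hi
    · intro hmem
      have hty : t • y ∈ p i := by
        have := (p i).sub_mem hmem hxj
        rwa [add_sub_cancel_left] at this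
      exact hy (by
        have := Submodule.smul_mem (p i) t⁻¹ hty
        rwa [smul_smul, inv_mul_cancel₀ ht0, one_smul] at this)
    · exact hts i hi

section Construction

variable {L : Type} [LieRing L] [LieAlgebra ℂ L]

local notation "D" => LieModule.lowerCentralSeries ℂ L L

lemma finrank_D {n : ℕ} (hf : IsFiliform L n) {j : ℕ} (h1 : 1 ≤ j) (h2 : j ≤ n - 1) :
    finrank ℂ (D j) = n - 1 - j := by
  have h := hf.2.2.2 (j + 1) (by omega) (by omega)
  rw [show n - (j + 1) = n - 1 - j by omega] at h
  exact h

lemma D_bot {n : ℕ} (hf : IsFiliform L n) {j : ℕ} (h : n - 1 ≤ j) :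
    (D j : LieIdeal ℂ L) = ⊥ := by
  haveI := hf.2.1
  have hn2 := hf.1
  have h0 : finrank ℂ (D (n-1)) = 0 := by
    rw [finrank_D hf (by omega) le_rfl]; omega
  have h0' : finrank ℂ (LieSubmodule.toSubmodule (D (n-1) : LieIdeal ℂ L)) = 0 := h0
  have hb : (D (n-1) : LieIdeal ℂ L) = ⊥ := by
    have hbb := Submodule.finrank_eq_zero.mp h0'
    exact (LieSubmodule.toSubmodule_inj _ _).1 (by simpa using hbb)
  exact le_bot_iff.1 (hb ▸ LieModule.antitone_lowerCentralSeries ℂ L L h)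

theorem exists_adapted {n : ℕ} (hf : IsFiliform L n) : ∃ e : ℕ → L, IsAdaptedBasis L n e := by
  classical
  haveI := hf.2.1
  have hn2 := hf.1
  have hrank : finrank ℂ L = n := hf.2.2.1
  rcases eq_or_lt_of_le hn2 with h2 | hn3
  -- case n = 2 : L is abelian
  · subst h2
    have habel : ∀ u w : L, ⁅u, w⁆ = 0 := by
      intro u w
      have hb : (D 1 : LieIdeal ℂ L) = ⊥ := D_bot hf (by omega)
      have hm : ⁅u, w⁆ ∈ (D 1 : LieIdeal ℂ L) := by
        rw [LieModule.lowerCentralSeries_succ]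
        exact LieSubmodule.lie_mem_lie (LieSubmodule.mem_top u) (LieSubmodule.mem_top w)
      rw [hb] at hm
      exact (LieSubmodule.mem_bot _).1 hm
    let bb : Basis (Fin 2) ℂ L := Module.finBasisOfFinrankEq ℂ L hrank
    refine ⟨fun h => if hh : 1 ≤ h ∧ h ≤ 2 then bb ⟨h - 1, by omega⟩ else 0, ?_, ?_, ?_, ?_⟩
    · refine ⟨bb, fun i => ?_⟩
      simp only
      rw [dif_pos ⟨by omega, by omega⟩]
      congr 1
    · intro h h3 hn'; omega
    · intro h h1 hn'; exact habel _ _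
    · intro h hh1 hh2; exact habel _ _
  -- main case 3 ≤ n
  · have hD : ∀ j, 1 ≤ j → j ≤ n - 1 → finrank ℂ (D j) = n - 1 - j :=
      fun j h1 h2 => finrank_D hf h1 h2
    have hDbot : ∀ j, n - 1 ≤ j → (D j : LieIdeal ℂ L) = ⊥ := fun j h => D_bot hf h
    have hDfr : ∀ j, 1 ≤ j → j ≤ n - 1 →
        finrank ℂ (LieSubmodule.toSubmodule (D j : LieIdeal ℂ L)) = n - 1 - j := hD
    -- the bad subspaces
    let B : ℕ → Submodule ℂ L := fun k =>
      { carrier := {z | ∀ d ∈ (D k : LieIdeal ℂ L), ⁅z, d⁆ ∈ (D (k+2) : LieIdeal ℂ L)}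
        add_mem' := fun ha hb d hd => by
          rw [add_lie]; exact add_mem (ha d hd) (hb d hd)
        zero_mem' := fun d hd => by
          rw [zero_lie]; exact zero_mem _
        smul_mem' := fun c z hz d hd => by
          rw [smul_lie]; exact (D (k+2) : LieIdeal ℂ L).smul_mem c (hz d hd) }
    have hBmem : ∀ k (z : L), z ∈ B k ↔ ∀ d ∈ (D k : LieIdeal ℂ L), ⁅z, d⁆ ∈ (D (k+2) : LieIdeal ℂ L) :=
      fun k z => Iff.rfl
    have hBproper : ∀ k, 1 ≤ k → k ≤ n - 3 → B k ≠ ⊤ := by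
      intro k h1 h3 htop
      have hle : (D (k+1) : LieIdeal ℂ L) ≤ D (k+2) := by
        rw [LieModule.lowerCentralSeries_succ, LieSubmodule.lie_le_iff]
        intro z _ d hd
        have hz : z ∈ B k := htop ▸ Submodule.mem_top
        exact hz d hd
      have heq : (D (k+1) : LieIdeal ℂ L) = D (k+2) :=
        le_antisymm hle (LieModule.antitone_lowerCentralSeries ℂ L L (by omega))
      have e1 := hD (k+1) (by omega) (by omega)
      have e2 := hD (k+2) (by omega) (by omega)
      rw [heq] at e1
      omega
    have hD1proper : LieSubmodule.toSubmodule (D 1 : LieIdeal ℂ L) ≠ ⊤ := by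
      intro htop
      have e1 : finrank ℂ (LieSubmodule.toSubmodule (D 1 : LieIdeal ℂ L)) = n - 1 - 1 :=
        hDfr 1 (by omega) (by omega)
      rw [htop, finrank_top, hrank] at e1
      omega
    -- choice of x
    have hps : ∀ i ∈ insert 0 (Finset.Icc 1 (n-3)),
        (if i = 0 then LieSubmodule.toSubmodule (D 1 : LieIdeal ℂ L) else B i) ≠ ⊤ := by
      intro i hi
      rcases Finset.mem_insert.1 hi with rfl | hi
      · simpa using hD1proper
      · rw [Finset.mem_Icc] at hi
        rw [if_neg (by omega)]
        exact hBproper i hi.1 hi.2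
    obtain ⟨x, hx⟩ := avoid_finitely_many (insert 0 (Finset.Icc 1 (n-3)))
      (fun k => if k = 0 then LieSubmodule.toSubmodule (D 1 : LieIdeal ℂ L) else B k) hps
    have hxD1 : x ∉ LieSubmodule.toSubmodule (D 1 : LieIdeal ℂ L) := by
      have := hx 0 (Finset.mem_insert_self _ _)
      simpa using this
    have hxB : ∀ k, 1 ≤ k → k ≤ n - 3 → x ∉ B k := by
      intro k hk1 hk2
      have := hx k (Finset.mem_insert_of_mem (Finset.mem_Icc.2 ⟨hk1, hk2⟩))
      rwa [if_neg (by omega)] at this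
    -- choice of v
    have hxne : x ≠ 0 := fun h => hxD1 (h ▸ (LieSubmodule.toSubmodule (D 1 : LieIdeal ℂ L)).zero_mem)
    have hproper2 : (LieSubmodule.toSubmodule (D 1 : LieIdeal ℂ L) ⊔ (ℂ ∙ x)) ≠ ⊤ := by
      intro htop
      have h1 := Submodule.finrank_sup_add_finrank_inf_eq
        (LieSubmodule.toSubmodule (D 1 : LieIdeal ℂ L)) (ℂ ∙ x)
      have h2 : finrank ℂ (LieSubmodule.toSubmodule (D 1 : LieIdeal ℂ L)) = n - 1 - 1 :=
        hDfr 1 (by omega) (by omega)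
      have h3 : finrank ℂ (ℂ ∙ x : Submodule ℂ L) = 1 := finrank_span_singleton hxne
      rw [htop, finrank_top, hrank] at h1
      omega
    obtain ⟨v, hv⟩ : ∃ v : L, v ∉ LieSubmodule.toSubmodule (D 1 : LieIdeal ℂ L) ⊔ (ℂ ∙ x) := by
      by_contra hcon
      push_neg at hcon
      exact hproper2 (Submodule.eq_top_iff'.2 hcon)
    have hvD1 : v ∉ LieSubmodule.toSubmodule (D 1 : LieIdeal ℂ L) :=
      fun h => hv (Submodule.mem_sup_left h)
    -- the chain w
    let w : ℕ → L := fun k => Nat.rec v (fun _ wk => ⁅x, wk⁆) k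
    have hw0 : w 0 = v := rfl
    have hwS : ∀ k, w (k+1) = ⁅x, w k⁆ := fun k => rfl
    have hwD : ∀ k, w k ∈ (D k : LieIdeal ℂ L) := by
      intro k
      induction k with
      | zero => exact LieSubmodule.mem_top _
      | succ k ih =>
        rw [LieModule.lowerCentralSeries_succ]
        exact LieSubmodule.lie_mem_lie (LieSubmodule.mem_top x) ih
    -- top decomposition
    have htop2 : (Submodule.span ℂ {x, v}) ⊔ LieSubmodule.toSubmodule (D 1 : LieIdeal ℂ L) = ⊤ := by
      have l0 : finrank ℂ (LieSubmodule.toSubmodule (D 1 : LieIdeal ℂ L)) = n - 1 - 1 :=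
        hDfr 1 (by omega) (by omega)
      have hlt1 : LieSubmodule.toSubmodule (D 1 : LieIdeal ℂ L) <
          LieSubmodule.toSubmodule (D 1 : LieIdeal ℂ L) ⊔ (ℂ ∙ x) := by
        refine lt_of_le_of_ne le_sup_left fun hh => hxD1 ?_
        have hm : x ∈ LieSubmodule.toSubmodule (D 1 : LieIdeal ℂ L) ⊔ (ℂ ∙ x) :=
          Submodule.mem_sup_right (Submodule.mem_span_singleton_self x)
        rwa [← hh] at hm
      have hlt2 : LieSubmodule.toSubmodule (D 1 : LieIdeal ℂ L) ⊔ (ℂ ∙ x) <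
          (LieSubmodule.toSubmodule (D 1 : LieIdeal ℂ L) ⊔ (ℂ ∙ x)) ⊔ (ℂ ∙ v) := by
        refine lt_of_le_of_ne le_sup_left fun hh => hv ?_
        have hm : v ∈ (LieSubmodule.toSubmodule (D 1 : LieIdeal ℂ L) ⊔ (ℂ ∙ x)) ⊔ (ℂ ∙ v) :=
          Submodule.mem_sup_right (Submodule.mem_span_singleton_self v)
        rwa [← hh] at hm
      have f1 := Submodule.finrank_lt_finrank_of_lt hlt1
      have f2 := Submodule.finrank_lt_finrank_of_lt hlt2
      have f3 : finrank ℂ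
          (((LieSubmodule.toSubmodule (D 1 : LieIdeal ℂ L) ⊔ (ℂ ∙ x)) ⊔ (ℂ ∙ v) : Submodule ℂ L)) ≤ n :=
        hrank ▸ Submodule.finrank_le _
      have htopeq : (LieSubmodule.toSubmodule (D 1 : LieIdeal ℂ L) ⊔ (ℂ ∙ x)) ⊔ (ℂ ∙ v) = ⊤ :=
        Submodule.eq_top_of_finrank_eq (by rw [hrank]; omega)
      rw [eq_top_iff, ← htopeq]
      refine sup_le (sup_le le_sup_right ?_) ?_
      · exact le_trans (Submodule.span_mono (by simp : ({x} : Set L) ⊆ {x, v})) le_sup_left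
      · exact le_trans (Submodule.span_mono (by simp : ({v} : Set L) ⊆ {x, v})) le_sup_left
    -- ⁅x, v⁆ ∉ D 2
    have hw1 : ⁅x, v⁆ ∉ (D 2 : LieIdeal ℂ L) := by
      intro hmem
      set M : Submodule ℂ L := (ℂ ∙ ⁅x, v⁆) ⊔ LieSubmodule.toSubmodule (D 2 : LieIdeal ℂ L)
        with hMdef
      have hDle12 : ∀ z d : L, d ∈ (D 1 : LieIdeal ℂ L) → ⁅z, d⁆ ∈ (D 2 : LieIdeal ℂ L) := by
        intro z d hd
        show ⁅z, d⁆ ∈ (D (1+1) : LieIdeal ℂ L)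
        rw [LieModule.lowerCentralSeries_succ]
        exact LieSubmodule.lie_mem_lie (LieSubmodule.mem_top z) hd
      have hxv1 : ⁅x, v⁆ ∈ (D 1 : LieIdeal ℂ L) := hwD 1
      have hlieM : ∀ z m : L, m ∈ M → ⁅z, m⁆ ∈ M := by
        intro z m hm
        rcases Submodule.mem_sup.1 hm with ⟨s, hs, d, hd, rfl⟩
        rcases Submodule.mem_span_singleton.1 hs with ⟨c, rfl⟩
        rw [lie_add, lie_smul]
        refine add_mem (Submodule.smul_mem _ _ (Submodule.mem_sup_right ?_))
          (Submodule.mem_sup_right ?_)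
        · exact hDle12 z _ hxv1
        · have h3 : ⁅z, d⁆ ∈ (D (2+1) : LieIdeal ℂ L) := by
            rw [LieModule.lowerCentralSeries_succ]
            exact LieSubmodule.lie_mem_lie (LieSubmodule.mem_top z) hd
          exact LieModule.antitone_lowerCentralSeries ℂ L L (by omega : 2 ≤ 2 + 1) h3
      have hxM : ∀ b : L, ⁅x, b⁆ ∈ M := by
        intro b
        have hb : b ∈ Submodule.span ℂ {x, v} ⊔ LieSubmodule.toSubmodule (D 1 : LieIdeal ℂ L) :=
          htop2 ▸ Submodule.mem_top
        rcases Submodule.mem_sup.1 hb with ⟨s, hs, d, hd, rfl⟩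
        rcases Submodule.mem_span_pair.1 hs with ⟨α, β, rfl⟩
        rw [lie_add, lie_add, lie_smul, lie_smul, lie_self, smul_zero, zero_add]
        exact add_mem
          (Submodule.smul_mem _ _ (Submodule.mem_sup_left (Submodule.mem_span_singleton_self _)))
          (Submodule.mem_sup_right (hDle12 x d hd))
      have hvM : ∀ b : L, ⁅v, b⁆ ∈ M := by
        intro b
        have hb : b ∈ Submodule.span ℂ {x, v} ⊔ LieSubmodule.toSubmodule (D 1 : LieIdeal ℂ L) :=
          htop2 ▸ Submodule.mem_top
        rcases Submodule.mem_sup.1 hb with ⟨s, hs, d, hd, rfl⟩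
        rcases Submodule.mem_span_pair.1 hs with ⟨α, β, rfl⟩
        rw [lie_add, lie_add, lie_smul, lie_smul, lie_self, smul_zero, add_zero]
        refine add_mem (Submodule.smul_mem _ _ ?_) (Submodule.mem_sup_right (hDle12 v d hd))
        rw [← lie_skew]
        exact Submodule.mem_sup_left (neg_mem (Submodule.mem_span_singleton_self _))
      let M' : LieIdeal ℂ L := { M with lie_mem := fun {z m} hm => hlieM z m hm }
      have hDM : (D 1 : LieIdeal ℂ L) ≤ M' := by
        have hD1eq : (D 1 : LieIdeal ℂ L) = ⁅(⊤ : LieIdeal ℂ L), (⊤ : LieIdeal ℂ L)⁆ := by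
          have h := LieModule.lowerCentralSeries_succ ℂ L L 0
          rw [LieModule.lowerCentralSeries_zero] at h
          exact h
        rw [hD1eq, LieSubmodule.lie_le_iff]
        intro a _ b _
        show ⁅a, b⁆ ∈ M
        have ha : a ∈ Submodule.span ℂ {x, v} ⊔ LieSubmodule.toSubmodule (D 1 : LieIdeal ℂ L) :=
          htop2 ▸ Submodule.mem_top
        rcases Submodule.mem_sup.1 ha with ⟨s, hs, d, hd, rfl⟩
        rcases Submodule.mem_span_pair.1 hs with ⟨α, β, rfl⟩
        rw [add_lie, add_lie, smul_lie, smul_lie]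
        refine add_mem (add_mem (Submodule.smul_mem M α (hxM b)) (Submodule.smul_mem M β (hvM b)))
          ?_
        rw [← lie_skew]
        exact neg_mem (Submodule.mem_sup_right (hDle12 b d hd))
      have hMle : M ≤ LieSubmodule.toSubmodule (D 2 : LieIdeal ℂ L) := by
        refine sup_le ?_ le_rfl
        rw [Submodule.span_singleton_le_iff_mem]
        exact hmem
      have hle : (D 1 : LieIdeal ℂ L) ≤ D 2 := fun z hz => hMle (hDM hz)
      have heq : (D 1 : LieIdeal ℂ L) = D 2 :=
        le_antisymm hle (LieModule.antitone_lowerCentralSeries ℂ L L (by omega))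
      have e1 := hD 1 (by omega) (by omega)
      have e2 := hD 2 (by omega) (by omega)
      rw [heq] at e1
      omega
    -- generic step
    have hstep : ∀ k, 1 ≤ k → k ≤ n - 2 → w k ∉ (D (k+1) : LieIdeal ℂ L) →
        LieSubmodule.toSubmodule (D k : LieIdeal ℂ L) =
          (ℂ ∙ w k) ⊔ LieSubmodule.toSubmodule (D (k+1) : LieIdeal ℂ L) := by
      intro k h1 h2 hnot
      have hle : (ℂ ∙ w k) ⊔ LieSubmodule.toSubmodule (D (k+1) : LieIdeal ℂ L) ≤
          LieSubmodule.toSubmodule (D k : LieIdeal ℂ L) := by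
        refine sup_le ?_ ?_
        · rw [Submodule.span_singleton_le_iff_mem]
          exact hwD k
        · intro z hz
          exact LieModule.antitone_lowerCentralSeries ℂ L L (by omega : k ≤ k + 1) hz
      have hlt : LieSubmodule.toSubmodule (D (k+1) : LieIdeal ℂ L) <
          (ℂ ∙ w k) ⊔ LieSubmodule.toSubmodule (D (k+1) : LieIdeal ℂ L) := by
        refine lt_of_le_of_ne le_sup_right fun hh => hnot ?_
        have hm : w k ∈ (ℂ ∙ w k) ⊔ LieSubmodule.toSubmodule (D (k+1) : LieIdeal ℂ L) :=
          Submodule.mem_sup_left (Submodule.mem_span_singleton_self _)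
        rwa [← hh] at hm
      haveI : FiniteDimensional ℂ
          (((ℂ ∙ w k) ⊔ LieSubmodule.toSubmodule (D (k+1) : LieIdeal ℂ L)) : Submodule ℂ L) :=
        FiniteDimensional.finiteDimensional_submodule _
      have f1 := Submodule.finrank_lt_finrank_of_lt hlt
      have e1 := hDfr k (by omega) (by omega)
      have e2 := hDfr (k+1) (by omega) (by omega)
      haveI : FiniteDimensional ℂ
          ((LieSubmodule.toSubmodule (D k : LieIdeal ℂ L)) : Submodule ℂ L) :=
        FiniteDimensional.finiteDimensional_submodule _
      exact (Submodule.eq_of_le_of_finrank_le hle (by omega)).symm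
    have hwnot : ∀ k, k ≤ n - 2 → w k ∉ (D (k+1) : LieIdeal ℂ L) := by
      intro k
      induction k with
      | zero => exact fun _ h => hvD1 h
      | succ k ih =>
        intro hk1
        rcases Nat.eq_zero_or_pos k with rfl | hkpos
        · exact hw1
        · intro hmem
          have hwk := ih (by omega)
          have hDk := hstep k hkpos (by omega) hwk
          have hxk : x ∈ B k := by
            rw [hBmem]
            intro d hd
            have hd' : d ∈ LieSubmodule.toSubmodule (D k : LieIdeal ℂ L) := hd
            rw [hDk] at hd'
            rcases Submodule.mem_sup.1 hd' with ⟨s, hs, d', hd'', rfl⟩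
            rcases Submodule.mem_span_singleton.1 hs with ⟨c, rfl⟩
            rw [lie_add, lie_smul]
            refine add_mem ((D (k+2) : LieIdeal ℂ L).smul_mem c ?_) ?_
            · exact hmem
            · show ⁅x, d'⁆ ∈ (D (k+1+1) : LieIdeal ℂ L)
              rw [LieModule.lowerCentralSeries_succ]
              exact LieSubmodule.lie_mem_lie (LieSubmodule.mem_top x) hd''
          exact hxB k hkpos (by omega) hxk
    -- D (n-2) is spanned by w (n-2)
    have hw2ne : w (n-2) ≠ 0 := fun h =>
      hwnot (n-2) le_rfl (h ▸ (D (n-2+1) : LieIdeal ℂ L).zero_mem)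
    have hDn2 : LieSubmodule.toSubmodule (D (n-2) : LieIdeal ℂ L) = ℂ ∙ w (n-2) := by
      have h := hstep (n-2) (by omega) le_rfl (hwnot (n-2) le_rfl)
      rw [h, hDbot (n-2+1) (by omega)]
      simp
    -- the correction lambda
    obtain ⟨lam, hlam⟩ : ∃ lam : ℂ, lam • w (n-2) = ⁅w (n-3), v⁆ := by
      refine Submodule.mem_span_singleton.1 ?_
      rw [← hDn2]
      have h := lie_D_le (L := L) (n-3) 0
      have hm : ⁅w (n-3), v⁆ ∈ ⁅(D (n-3) : LieIdeal ℂ L), (D 0 : LieIdeal ℂ L)⁆ :=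
        LieSubmodule.lie_mem_lie (hwD (n-3)) (LieSubmodule.mem_top v)
      have hm2 := h hm
      rwa [show n - 3 + 0 + 1 = n - 2 by omega] at hm2
    set v' : L := v + lam • x with hv'def
    -- the basis family
    set e : ℕ → L := (fun h => if h = 1 then x else if h = n then v' else w (n - h)) with hedef
    have he1 : e 1 = x := by
      show (if 1 = 1 then x else _) = x
      rw [if_pos rfl]
    have hen : e n = v' := by
      show (if n = 1 then x else if n = n then v' else w (n - n)) = v'
      rw [if_neg (by omega : ¬ n = 1)]
      simp
    have heh : ∀ h, 2 ≤ h → h ≤ n - 1 → e h = w (n - h) := by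
      intro h hh1 hh2
      show (if h = 1 then x else if h = n then v' else w (n - h)) = w (n - h)
      rw [if_neg (by omega), if_neg (by omega)]
    have hxv' : ⁅x, v'⁆ = w 1 := by
      rw [hv'def, lie_add, lie_smul, lie_self, smul_zero, add_zero]
      rfl
    -- adapted property (ii)
    have hii : ∀ h, 3 ≤ h → h ≤ n → ⁅e 1, e h⁆ = e (h - 1) := by
      intro h h3 hn'
      rw [he1]
      rcases eq_or_lt_of_le hn' with heq | hlt
      · rw [heq, hen, hxv', heh (n-1) (by omega) (by omega),
          show n - (n-1) = 1 from by omega]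
      · rw [heh h (by omega) (by omega), heh (h-1) (by omega) (by omega),
          show n - (h-1) = n - h + 1 from by omega, ← hwS (n-h)]
    -- e 2 is central
    have hcentral : ∀ u : L, ⁅u, w (n-2)⁆ = 0 := by
      intro u
      have hm : ⁅u, w (n-2)⁆ ∈ (D (n-2+1) : LieIdeal ℂ L) := by
        rw [LieModule.lowerCentralSeries_succ]
        exact LieSubmodule.lie_mem_lie (LieSubmodule.mem_top u) (hwD (n-2))
      rw [hDbot (n-2+1) (by omega)] at hm
      exact (LieSubmodule.mem_bot _).1 hm
    have he2 : e 2 = w (n-2) := heh 2 (by omega) (by omega)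
    have hiii : ∀ u : L, ⁅e 2, u⁆ = 0 := by
      intro u
      rw [he2, ← lie_skew, hcentral u, neg_zero]
    -- adapted property (iv)
    have hiv : ∀ h, 2 ≤ h → h ≤ n → ⁅e 3, e h⁆ = 0 := by
      rcases eq_or_lt_of_le (show 3 ≤ n by omega) with h3 | hn4
      · -- n = 3
        intro h hh2 hhn
        have hh3 : h ≤ 3 := by omega
        interval_cases h
        · rw [← lie_skew, hiii (e 3), neg_zero]
        · rw [← h3] at hen
          rw [hen, lie_self]
      · -- 4 ≤ n
        have he3 : e 3 = w (n-3) := heh 3 (by omega) (by omega)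
        have hxw : ⁅w (n-3), x⁆ = - w (n-2) := by
          rw [← lie_skew, ← hwS (n-3), show n-3+1 = n-2 from by omega]
        have ha : ⁅e 3, e n⁆ = 0 := by
          rw [he3, hen, hv'def, lie_add, lie_smul, ← hlam, hxw, smul_neg]
          simp
        have hdown : ∀ d, d ≤ n-3 → ⁅e 3, e (n - d)⁆ = 0 := by
          intro d
          induction d with
          | zero => intro _; simpa using ha
          | succ d ih =>
            intro hd
            have hih := ih (by omega)
            have h1 : ⁅e 1, e 3⁆ = e 2 := hii 3 le_rfl (by omega)
            have h2 : ⁅e 1, e (n-d)⁆ = e (n-d-1) := hii (n-d) (by omega) (by omega)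
            have key := leibniz_lie (e 1) (e 3) (e (n-d))
            rw [hih, lie_zero, h1, h2, hiii (e (n-d)), zero_add] at key
            rw [show n - (d+1) = n - d - 1 from by omega]
            exact key.symm
        intro h hh2 hhn
        rcases eq_or_lt_of_le hh2 with hh2' | hh3
        · rw [← hh2', ← lie_skew, hiii (e 3), neg_zero]
        · have hdn := hdown (n - h) (by omega)
          rwa [show n - (n - h) = h from by omega] at hdn
    -- the basis
    have hbasis : ∃ b : Basis (Fin n) ℂ L, ∀ i : Fin n, b i = e (i.1 + 1) := by
      set f : Fin n → L := fun i => e (i.1 + 1) with hfdef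
      have hxmem : x ∈ Set.range f := ⟨⟨0, by omega⟩, he1⟩
      have hv'mem : v' ∈ Set.range f := by
        refine ⟨⟨n-1, by omega⟩, ?_⟩
        show e (n - 1 + 1) = v'
        rw [show n - 1 + 1 = n from by omega, hen]
      have hwmem : ∀ t, t ≤ n - 3 → w (n-2-t) ∈ Set.range f := by
        intro t ht
        refine ⟨⟨t+1, by omega⟩, ?_⟩
        show e (t + 1 + 1) = w (n-2-t)
        rw [heh (t+1+1) (by omega) (by omega), show n - (t+1+1) = n-2-t from by omega]
      set R := Submodule.span ℂ (Set.range f) with hRdef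
      have hDspan : ∀ t, t ≤ n - 2 → LieSubmodule.toSubmodule (D (n-1-t) : LieIdeal ℂ L) ≤ R := by
        intro t
        induction t with
        | zero =>
          intro _
          rw [show n - 1 - 0 = n - 1 from rfl, hDbot (n-1) le_rfl]
          simp
        | succ t ih =>
          intro ht
          have heq := hstep (n-2-t) (by omega) (by omega) (hwnot (n-2-t) (by omega))
          rw [show n - 1 - (t+1) = n-2-t from by omega, heq]
          refine sup_le ?_ ?_
          · rw [Submodule.span_singleton_le_iff_mem]
            exact Submodule.subset_span (hwmem t (by omega))
          · rw [show n-2-t+1 = n-1-t from by omega]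
            exact ih (by omega)
      have hspan : ⊤ ≤ R := by
        rw [← htop2]
        refine sup_le ?_ ?_
        · rw [Submodule.span_le]
          intro z hz
          simp only [Set.mem_insert_iff, Set.mem_singleton_iff] at hz
          rcases hz with rfl | rfl
          · exact Submodule.subset_span hxmem
          · have hveq : z = v' - lam • x := by rw [hv'def, add_sub_cancel_right]
            rw [hveq]
            exact sub_mem (Submodule.subset_span hv'mem)
              (Submodule.smul_mem _ _ (Submodule.subset_span hxmem))
        · have hd1 := hDspan (n-2) le_rfl
          rwa [show n - 1 - (n-2) = 1 from by omega] at hd1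
      have hcard : Fintype.card (Fin n) = finrank ℂ L := by rw [Fintype.card_fin, hrank]
      refine ⟨basisOfTopLeSpanOfCardEqFinrank f hspan hcard, fun i => ?_⟩
      rw [coe_basisOfTopLeSpanOfCardEqFinrank]
    exact ⟨e, hbasis, hii, fun h _ _ => hiii (e h), hiv⟩

end Construction

section Derivation

variable {L : Type} [LieRing L] [LieAlgebra ℂ L]

local notation "D" => LieModule.lowerCentralSeries ℂ L L

lemma e_mem_D {n : ℕ} {e : ℕ → L} (hb : IsAdaptedBasis L n e) :
    ∀ j h, 2 ≤ h → h + j ≤ n → e h ∈ (D j : LieIdeal ℂ L) := by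
  intro j
  induction j with
  | zero => intro h _ _; exact LieSubmodule.mem_top _
  | succ j ih =>
    intro h h2 hsum
    have heq : e h = ⁅e 1, e (h+1)⁆ := (hb.2.1 (h+1) (by omega) (by omega)).symm
    rw [heq, LieModule.lowerCentralSeries_succ]
    exact LieSubmodule.lie_mem_lie (LieSubmodule.mem_top _) (ih (h+1) (by omega) (by omega))

lemma span_D {n : ℕ} (hf : IsFiliform L n) {e : ℕ → L} (hb : IsAdaptedBasis L n e) :
    ∀ j, 1 ≤ j → j ≤ n - 1 →
      LieSubmodule.toSubmodule (D j : LieIdeal ℂ L) = Submodule.span ℂ (e '' Set.Icc 2 (n - j)) := by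
  intro j h1 h2
  haveI := hf.2.1
  obtain ⟨b, hbe⟩ := hb.1
  set c : Fin (n - j - 1) → L := fun i => e (i.1 + 2) with hc
  have hrange : Set.range c = e '' Set.Icc 2 (n - j) := by
    ext z
    constructor
    · rintro ⟨i, rfl⟩
      exact ⟨i.1 + 2, ⟨by omega, by omega⟩, rfl⟩
    · rintro ⟨h, ⟨hh2, hhn⟩, rfl⟩
      refine ⟨⟨h - 2, by omega⟩, ?_⟩
      show e (h - 2 + 2) = e h
      congr 1
      omega
  have hci : LinearIndependent ℂ c := by
    have hceq : c = b ∘ (fun i : Fin (n - j - 1) => (⟨i.1 + 1, by omega⟩ : Fin n)) := by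
      funext i
      simp only [Function.comp_apply, hbe]
      rfl
    rw [hceq]
    exact b.linearIndependent.comp _ (fun a b hab => by
      simpa [Fin.ext_iff] using hab)
  have hfr : finrank ℂ (Submodule.span ℂ (Set.range c)) = n - j - 1 := by
    rw [finrank_span_eq_card hci, Fintype.card_fin]
  have hle : Submodule.span ℂ (e '' Set.Icc 2 (n - j)) ≤ LieSubmodule.toSubmodule (D j : LieIdeal ℂ L) := by
    rw [Submodule.span_le]
    rintro z ⟨h, ⟨hh2, hhn⟩, rfl⟩
    exact e_mem_D hb j h hh2 (by omega)
  have hDj : finrank ℂ (LieSubmodule.toSubmodule (D j : LieIdeal ℂ L)) = n - 1 - j :=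
    finrank_D hf h1 h2
  haveI : FiniteDimensional ℂ (LieSubmodule.toSubmodule (D j : LieIdeal ℂ L) : Submodule ℂ L) :=
    FiniteDimensional.finiteDimensional_submodule _
  refine (Submodule.eq_of_le_of_finrank_le hle ?_).symm
  rw [hDj, ← hrange, hfr]
  omega

end Derivation

/-- `L` is (isomorphic to) the model filiform Lie algebra of dimension `n`,
i.e. it admits a basis whose only nonzero brackets are `⁅e 1, e h⁆ = e (h-1)`. -/
def IsModel (n : ℕ) : Prop :=
  ∃ e : ℕ → L,
    (∃ b : Basis (Fin n) ℂ L, ∀ i : Fin n, b i = e (i.1 + 1)) ∧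
    (∀ h, 3 ≤ h → h ≤ n → ⁅e 1, e h⁆ = e (h - 1)) ∧
    ⁅e 1, e 2⁆ = 0 ∧
    (∀ i j, 2 ≤ i → i < j → j ≤ n → ⁅e i, e j⁆ = 0)

/-- `L` is a non-model filiform Lie algebra with associated triple `(z₁, z₂, n)`. -/
def HasTriple (z₁ z₂ n : ℕ) : Prop :=
  IsFiliform L n ∧ ¬ IsModel L n ∧
  ∀ e : ℕ → L, IsAdaptedBasis L n e →
    IsLeast {k | 4 ≤ k ∧ ⁅e k, e n⁆ ≠ 0} z₁ ∧
    IsLeast {k | 4 ≤ k ∧ ⁅e k, e (k + 1)⁆ ≠ 0} z₂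

/-- `θ_k(L)`: the least `ℓ ≥ 1` with `⁅C^k L, C^ℓ L⁆ = 0`. -/
noncomputable def theta (k : ℕ) : ℕ := sInf {ℓ | 1 ≤ ℓ ∧ ⁅C L k, C L ℓ⁆ = ⊥}

/-- `P h u` is the `h`-th coordinate of `u` in the basis `e 1, …, e n` (and `0` for
`h` outside `{1, …, n}`). -/
def IsCoords (n : ℕ) (e : ℕ → L) (P : ℕ → L → ℂ) : Prop :=
  (∀ u : L, u = ∑ h ∈ Finset.Icc 1 n, P h u • e h) ∧
  (∀ u : L, ∀ h, h ∉ Finset.Icc 1 n → P h u = 0)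

/-- `(α, γ, β)` is a family of parameters associated with `L` (with triple `(z₁, z₂, n)`)
with respect to the adapted basis `e` with coordinate functions `P`. -/
def IsAssocParams (z₁ z₂ n : ℕ) (e : ℕ → L) (P : ℕ → L → ℂ)
    (α γ : ℕ → ℂ) (β : ℕ → ℕ → ℂ) : Prop :=
  (∀ i, i ≤ z₂ - z₁ →
    ⁅e (z₁ + i), e (z₂ + 1)⁆ = ∑ m ∈ Finset.Icc 1 (i + 1), α m • e (i + 3 - m)) ∧
  (∀ j, 2 ≤ j → j ≤ n - z₂ →
    ⁅e z₁, e (z₂ + j)⁆ =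
      α 1 • e (j + 1) + ∑ m ∈ Finset.Icc 1 (j - 1), γ m • e (j + 1 - m)) ∧
  (∀ k ℓ, 2 ≤ ℓ → ℓ ≤ n - z₂ → 1 ≤ k → k < z₂ - z₁ + ℓ →
    ⁅e (z₁ + k), e (z₂ + ℓ)⁆ =
      (∑ h ∈ Finset.Icc 2 (k + ℓ),
        P h (⁅e (z₁ + k - 1), e (z₂ + ℓ)⁆ + ⁅e (z₁ + k), e (z₂ + ℓ - 1)⁆) • e (h + 1))
      + β k ℓ • e 2)

section Final

local notation "DD" => LieModule.lowerCentralSeries ℂ L L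

/-- For a non-model filiform Lie algebra with triple `(z₁, z₂, n)` and `z₂* = n + 1 - z₂`:
`⁅C^{z₂*}, C^{z₂*}⁆ = 0`, `⁅C^{z₂*-1}, C^{z₂*}⁆ ≠ 0`, i.e. `θ_{z₂*} = z₂*`. -/
theorem statement1 (z₁ z₂ n : ℕ) (h : HasTriple L z₁ z₂ n) :
    (⁅C L (n + 1 - z₂), C L (n + 1 - z₂)⁆ : LieIdeal ℂ L) = ⊥ ∧
    (⁅C L (n + 1 - z₂ - 1), C L (n + 1 - z₂)⁆ : LieIdeal ℂ L) ≠ ⊥ ∧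
    theta L (n + 1 - z₂) = n + 1 - z₂ := by
  obtain ⟨hf, hnm, htr⟩ := h
  haveI := hf.2.1
  have hn2 := hf.1
  obtain ⟨e, he⟩ := exists_adapted hf
  -- the truncated adapted basis
  set e₀ : ℕ → L := fun h => if 1 ≤ h ∧ h ≤ n then e h else 0 with he₀def
  have he₀b : IsAdaptedBasis L n e₀ := by
    obtain ⟨⟨b, hb⟩, h1, h2, h3⟩ := he
    refine ⟨⟨b, fun i => ?_⟩, ?_, ?_, ?_⟩
    · show b i = if 1 ≤ i.1 + 1 ∧ i.1 + 1 ≤ n then e (i.1 + 1) else 0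
      rw [if_pos ⟨by omega, by omega⟩]
      exact hb i
    · intro hh h3' hn'
      show ⁅(if 1 ≤ 1 ∧ 1 ≤ n then e 1 else 0), (if 1 ≤ hh ∧ hh ≤ n then e hh else 0)⁆ =
        if 1 ≤ hh - 1 ∧ hh - 1 ≤ n then e (hh - 1) else 0
      rw [if_pos ⟨by omega, by omega⟩, if_pos ⟨by omega, by omega⟩, if_pos ⟨by omega, by omega⟩]
      exact h1 hh h3' hn'
    · intro hh h1' hn'
      show ⁅(if 1 ≤ 2 ∧ 2 ≤ n then e 2 else 0), (if 1 ≤ hh ∧ hh ≤ n then e hh else 0)⁆ = 0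
      rw [if_pos ⟨by omega, by omega⟩, if_pos ⟨by omega, by omega⟩]
      exact h2 hh h1' hn'
    · intro hh h2' hn'
      show ⁅(if 1 ≤ 3 ∧ 3 ≤ n then e 3 else 0), (if 1 ≤ hh ∧ hh ≤ n then e hh else 0)⁆ = 0
      rcases le_or_gt 3 n with h3n | h3n
      · rw [if_pos ⟨by omega, by omega⟩, if_pos ⟨by omega, by omega⟩]
        exact h3 hh h2' hn'
      · rw [if_neg (by omega), zero_lie]
  obtain ⟨_, hz2⟩ := htr e₀ he₀b
  obtain ⟨⟨hz24, hz2ne⟩, hz2lb⟩ := hz2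
  have hz2n : z₂ + 1 ≤ n := by
    by_contra hcon
    apply hz2ne
    have hz0 : e₀ (z₂ + 1) = 0 := by
      show (if 1 ≤ z₂ + 1 ∧ z₂ + 1 ≤ n then e (z₂ + 1) else 0) = 0
      rw [if_neg (by omega)]
    rw [hz0, lie_zero]
  have he₀e : ∀ k, 1 ≤ k → k ≤ n → e₀ k = e k := by
    intro k hk1 hk2
    show (if 1 ≤ k ∧ k ≤ n then e k else 0) = e k
    rw [if_pos ⟨hk1, hk2⟩]
  have hz2e : ⁅e z₂, e (z₂ + 1)⁆ ≠ 0 := by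
    rwa [he₀e z₂ (by omega) (by omega), he₀e (z₂ + 1) (by omega) (by omega)] at hz2ne
  have hz2min : ∀ k, 4 ≤ k → k < z₂ → ⁅e k, e (k + 1)⁆ = 0 := by
    intro k h4 hk
    by_contra hne
    have hmem : k ∈ {k | 4 ≤ k ∧ ⁅e₀ k, e₀ (k + 1)⁆ ≠ 0} := by
      refine ⟨h4, ?_⟩
      rwa [he₀e k (by omega) (by omega), he₀e (k + 1) (by omega) (by omega)]
    exact absurd (hz2lb hmem) (by omega)
  -- brackets vanish on indices 2..z₂
  have hzero : ∀ i j, 2 ≤ i → i ≤ z₂ → 2 ≤ j → j ≤ z₂ → ⁅e i, e j⁆ = 0 := by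
    obtain ⟨hbb, hbr1, hbr2, hbr3⟩ := he
    have key : ∀ d i j, 2 ≤ i → i < j → j ≤ z₂ → j - i ≤ d → ⁅e i, e j⁆ = 0 := by
      intro d
      induction d with
      | zero => intro i j _ hij _ hd; omega
      | succ d ih =>
        intro i j h2 hij hjz hd
        rcases eq_or_lt_of_le (show i + 1 ≤ j by omega) with heq | hlt
        · rw [← heq]
          rcases (by omega : i = 2 ∨ i = 3 ∨ 4 ≤ i) with hi | hi | hi
          · rw [hi]; exact hbr2 3 (by omega) (by omega)
          · rw [hi]; exact hbr3 4 (by omega) (by omega)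
          · exact hz2min i hi (by omega)
        · have hi1 : ⁅e 1, e (i + 1)⁆ = e i := hbr1 (i + 1) (by omega) (by omega)
          have hj1 : ⁅e 1, e j⁆ = e (j - 1) := hbr1 j (by omega) (by omega)
          have hup : ⁅e (i + 1), e j⁆ = 0 := ih (i + 1) j (by omega) hlt hjz (by omega)
          have key2 := leibniz_lie (e 1) (e (i + 1)) (e j)
          rw [hup, lie_zero, hi1, hj1] at key2
          have hlast : ⁅e (i + 1), e (j - 1)⁆ = 0 := by
            rcases eq_or_lt_of_le (show i + 1 ≤ j - 1 by omega) with heq2 | hlt2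
            · rw [← heq2, lie_self]
            · exact ih (i + 1) (j - 1) (by omega) hlt2 (by omega) (by omega)
          rw [hlast, add_zero] at key2
          exact key2.symm
    intro i j h2i hiz h2j hjz
    rcases lt_trichotomy i j with hij | hij | hij
    · exact key (j - i) i j h2i hij hjz le_rfl
    · rw [hij, lie_self]
    · rw [← lie_skew, key (i - j) j i h2j hij hiz le_rfl, neg_zero]
  -- span description of C^{z₂*}
  have hsp : LieSubmodule.toSubmodule (DD (n - z₂) : LieIdeal ℂ L) =
      Submodule.span ℂ (e '' Set.Icc 2 z₂) := by
    have h := span_D hf he (n - z₂) (by omega) (by omega)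
    rwa [show n - (n - z₂) = z₂ from by omega] at h
  have hCeq : C L (n + 1 - z₂) = (DD (n - z₂) : LieIdeal ℂ L) := by
    show (DD (n + 1 - z₂ - 1) : LieIdeal ℂ L) = DD (n - z₂)
    rw [show n + 1 - z₂ - 1 = n - z₂ from by omega]
  -- part 1
  have part1 : (⁅C L (n + 1 - z₂), C L (n + 1 - z₂)⁆ : LieIdeal ℂ L) = ⊥ := by
    rw [eq_bot_iff, LieSubmodule.lie_le_iff]
    intro a ha b hb
    rw [LieSubmodule.mem_bot]
    have ha' : a ∈ Submodule.span ℂ (e '' Set.Icc 2 z₂) := by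
      rw [← hsp]
      exact (hCeq ▸ ha : a ∈ (DD (n - z₂) : LieIdeal ℂ L))
    have hb' : b ∈ Submodule.span ℂ (e '' Set.Icc 2 z₂) := by
      rw [← hsp]
      exact (hCeq ▸ hb : b ∈ (DD (n - z₂) : LieIdeal ℂ L))
    have hszero : ∀ p ∈ e '' Set.Icc 2 z₂, ∀ q ∈ e '' Set.Icc 2 z₂, ⁅p, q⁆ = (0 : L) := by
      rintro p ⟨i, ⟨hi1, hi2⟩, rfl⟩ q ⟨j, ⟨hj1, hj2⟩, rfl⟩
      exact hzero i j hi1 hi2 hj1 hj2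
    clear ha hb
    induction ha' using Submodule.span_induction with
    | mem z hz =>
      induction hb' using Submodule.span_induction with
      | mem z' hz' => exact hszero z hz z' hz'
      | zero => rw [lie_zero]
      | add p q _ _ h1 h2 => rw [lie_add, h1, h2, add_zero]
      | smul cc p _ h1 => rw [lie_smul, h1, smul_zero]
    | zero => rw [zero_lie]
    | add p q _ _ h1 h2 => rw [add_lie, h1, h2, add_zero]
    | smul cc p _ h1 => rw [smul_lie, h1, smul_zero]
  -- part 2
  have part2 : (⁅C L (n + 1 - z₂ - 1), C L (n + 1 - z₂)⁆ : LieIdeal ℂ L) ≠ ⊥ := by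
    intro hbot
    have hmem1 : e (z₂ + 1) ∈ C L (n + 1 - z₂ - 1) := by
      show e (z₂ + 1) ∈ (DD (n + 1 - z₂ - 1 - 1) : LieIdeal ℂ L)
      rw [show n + 1 - z₂ - 1 - 1 = n - (z₂ + 1) from by omega]
      exact e_mem_D he (n - (z₂ + 1)) (z₂ + 1) (by omega) (by omega)
    have hmem2 : e z₂ ∈ C L (n + 1 - z₂) := by
      rw [hCeq]
      exact e_mem_D he (n - z₂) z₂ (by omega) (by omega)
    have hmem : ⁅e (z₂ + 1), e z₂⁆ ∈ (⁅C L (n + 1 - z₂ - 1), C L (n + 1 - z₂)⁆ : LieIdeal ℂ L) :=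
      LieSubmodule.lie_mem_lie hmem1 hmem2
    rw [hbot, LieSubmodule.mem_bot] at hmem
    apply hz2e
    rw [← lie_skew, hmem, neg_zero]
  -- part 3
  have hleast : IsLeast {ℓ | 1 ≤ ℓ ∧ (⁅C L (n + 1 - z₂), C L ℓ⁆ : LieIdeal ℂ L) = ⊥}
      (n + 1 - z₂) := by
    constructor
    · exact ⟨by omega, part1⟩
    · intro ℓ hℓ
      by_contra hcon
      push_neg at hcon
      have hmono : C L (n + 1 - z₂ - 1) ≤ C L ℓ := by
        show (DD (n + 1 - z₂ - 1 - 1) : LieIdeal ℂ L) ≤ DD (ℓ - 1)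
        exact LieModule.antitone_lowerCentralSeries ℂ L L (by omega)
      have hle2 : (⁅C L (n + 1 - z₂ - 1), C L (n + 1 - z₂)⁆ : LieIdeal ℂ L) ≤
          ⁅C L (n + 1 - z₂), C L ℓ⁆ := by
        rw [LieSubmodule.lie_comm]
        exact LieSubmodule.mono_lie_right _ hmono
      rw [hℓ.2] at hle2
      exact part2 (le_bot_iff.1 hle2)
  exact ⟨part1, part2, hleast.csInf_eq⟩

end Final
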